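/- Let ℓ, ℓ', m, m' ≥ 0 be non-negative integers with ℓ ≤ ℓ' and m ≤ m', and let 0 < p < 1/2 with q = 1 - p. If the derivative with respect to p of (pq)^{ℓ'} (p^m + q^m) is negative at p, then the derivative with respect to p of (pq)^{ℓ} (p^{m'} + q^{m'}) is negative at p. -/

import Mathlib

lemma myDeriv (ℓ m : ℕ) (p : ℝ) :
    deriv (fun x : ℝ => (x * (1 - x)) ^ ℓ * (x ^ m + (1 - x) ^ m)) p =
      (ℓ * (p * (1 - p)) ^ (ℓ - 1) * (1 - 2 * p)) * (p ^ m + (1 - p) ^ m)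
        + (p * (1 - p)) ^ ℓ * (m * p ^ (m - 1) - m * (1 - p) ^ (m - 1)) := by
  have h1 : HasDerivAt (fun x : ℝ => x * (1 - x)) (1 - 2 * p) p := by
    have := (hasDerivAt_id p).mul ((hasDerivAt_const p (1:ℝ)).sub (hasDerivAt_id p))
    convert this using 1
    · rfl
    · rfl
    · rfl
    · simp [id]; ring
  have h2 := h1.pow ℓ
  have h3 : HasDerivAt (fun x : ℝ => x ^ m + (1 - x) ^ m)
      (m * p ^ (m - 1) - m * (1 - p) ^ (m - 1)) p := by
    have := (hasDerivAt_pow m p).add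
      ((((hasDerivAt_const p (1:ℝ)).sub (hasDerivAt_id p)).pow m))
    convert this using 1
    · rfl
    · rfl
    · rfl
    · simp [id]; ring
  exact (h2.mul h3).deriv

lemma core_step (ℓ j : ℕ) (p : ℝ) (hp0 : 0 < p) (hp : p < 1/2)
    (H : ℓ * (1 - 2*p) * (p^(j+1) + (1-p)^(j+1)) < (j+1) * (p*(1-p)) * ((1-p)^j - p^j)) :
    ℓ * (1 - 2*p) * (p^(j+2) + (1-p)^(j+2)) < (j+2) * (p*(1-p)) * ((1-p)^(j+1) - p^(j+1)) := by
  have hq0 : (0:ℝ) < 1 - p := by linarith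
  have hpq : p < 1 - p := by linarith
  have hpj : (0:ℝ) < p ^ j := pow_pos hp0 j
  have hpj1 : (0:ℝ) < p ^ (j+1) := pow_pos hp0 _
  have h1 : p * p^j ≤ (1-p) * p^j := by nlinarith
  have h1' : p * p^(j+1) ≤ (1-p) * p^(j+1) := by nlinarith
  have h2 : p^(j+1) ≤ (1-p)^(j+1) := pow_le_pow_left₀ (le_of_lt hp0) (le_of_lt hpq) _
  have h3 : (0:ℝ) ≤ ℓ * (1 - 2*p) := by
    have : (0:ℝ) ≤ (ℓ:ℝ) := Nat.cast_nonneg _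
    nlinarith
  have ep1 : p^(j+1) = p * p^j := by ring
  have ep2 : p^(j+2) = p * p^(j+1) := by ring
  have eq1 : (1-p)^(j+1) = (1-p) * (1-p)^j := by ring
  have eq2 : (1-p)^(j+2) = (1-p) * (1-p)^(j+1) := by ring
  have step1 : p^(j+2) + (1-p)^(j+2) ≤ (1-p) * (p^(j+1) + (1-p)^(j+1)) := by
    rw [ep2, eq2]; linarith
  have key : ℓ * (1 - 2*p) * (p^(j+2) + (1-p)^(j+2))
      ≤ (1-p) * (ℓ * (1 - 2*p) * (p^(j+1) + (1-p)^(j+1))) := by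
    calc ℓ * (1 - 2*p) * (p^(j+2) + (1-p)^(j+2))
        ≤ ℓ * (1 - 2*p) * ((1-p) * (p^(j+1) + (1-p)^(j+1))) :=
          mul_le_mul_of_nonneg_left step1 h3
      _ = (1-p) * (ℓ * (1 - 2*p) * (p^(j+1) + (1-p)^(j+1))) := by ring
  have hHq := mul_lt_mul_of_pos_left H hq0
  have inner : (1-p) * ((1-p)^j - p^j) ≤ (1-p)^(j+1) - p^(j+1) := by
    rw [eq1, ep1]; linarith
  have hcoef : (0:ℝ) ≤ ((j:ℝ)+1) * (p*(1-p)) := by positivity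
  have key2 : (1-p) * (((j:ℝ)+1) * (p*(1-p)) * ((1-p)^j - p^j))
      ≤ ((j:ℝ)+1) * (p*(1-p)) * ((1-p)^(j+1) - p^(j+1)) := by
    calc (1-p) * (((j:ℝ)+1) * (p*(1-p)) * ((1-p)^j - p^j))
        = ((j:ℝ)+1) * (p*(1-p)) * ((1-p) * ((1-p)^j - p^j)) := by ring
      _ ≤ ((j:ℝ)+1) * (p*(1-p)) * ((1-p)^(j+1) - p^(j+1)) :=
          mul_le_mul_of_nonneg_left inner hcoef
  have key3 : ((j:ℝ)+1) * (p*(1-p)) * ((1-p)^(j+1) - p^(j+1))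
      ≤ ((j:ℝ)+2) * (p*(1-p)) * ((1-p)^(j+1) - p^(j+1)) := by
    have h4 : (0:ℝ) ≤ (1-p)^(j+1) - p^(j+1) := by linarith
    have h5 : (0:ℝ) ≤ p * (1-p) := by positivity
    nlinarith
  push_cast at hHq key2 key3 ⊢
  linarith

lemma core (ℓ ℓ' k k' : ℕ) (hℓ : ℓ ≤ ℓ') (hk : k ≤ k') (p : ℝ) (hp0 : 0 < p) (hp : p < 1/2)
    (H : ℓ' * (1 - 2*p) * (p^(k+1) + (1-p)^(k+1)) < (k+1) * (p*(1-p)) * ((1-p)^k - p^k)) :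
    ℓ * (1 - 2*p) * (p^(k'+1) + (1-p)^(k'+1)) < (k'+1) * (p*(1-p)) * ((1-p)^(k') - p^(k')) := by
  have hq0 : (0:ℝ) < 1 - p := by linarith
  have hL : ℓ * (1 - 2*p) * (p^(k+1) + (1-p)^(k+1)) < (k+1) * (p*(1-p)) * ((1-p)^k - p^k) := by
    have hcast : (ℓ:ℝ) ≤ (ℓ':ℝ) := Nat.cast_le.mpr hℓ
    have h0 : (0:ℝ) < p^(k+1) + (1-p)^(k+1) := add_pos (pow_pos hp0 _) (pow_pos hq0 _)
    have hpos : (0:ℝ) ≤ (1 - 2*p) * (p^(k+1) + (1-p)^(k+1)) := by nlinarith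
    nlinarith
  clear H
  induction k' with
  | zero => simpa [Nat.le_zero.mp hk] using hL
  | succ n ih =>
    rcases Nat.lt_or_ge k (n+1) with h | h
    · have h1 := ih (Nat.lt_succ_iff.mp h)
      have h2 := core_step ℓ n p hp0 hp h1
      convert h2 using 2 <;> push_cast <;> ring
    · have : k = n + 1 := le_antisymm hk h
      subst this
      exact hL

lemma sign_iff (ℓ k : ℕ) (p : ℝ) (hp0 : 0 < p) (hp : p < 1/2) :
    ((ℓ * (p * (1 - p)) ^ (ℓ - 1) * (1 - 2 * p)) * (p ^ (k+1) + (1 - p) ^ (k+1))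
        + (p * (1 - p)) ^ ℓ * ((k+1) * p ^ k - (k+1) * (1 - p) ^ k) < 0)
      ↔ ℓ * (1 - 2*p) * (p^(k+1) + (1-p)^(k+1)) < (k+1) * (p*(1-p)) * ((1-p)^k - p^k) := by
  have hq0 : (0:ℝ) < 1 - p := by linarith
  have hpq : (0:ℝ) < p * (1 - p) := mul_pos hp0 hq0
  have hk1 : (0:ℝ) < (k:ℝ) + 1 := by positivity
  cases ℓ with
  | zero =>
    simp only [Nat.cast_zero, zero_mul, pow_zero, one_mul, zero_add]
    constructor
    · intro h
      have hd : (0:ℝ) < (1-p)^k - p^k := by nlinarith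
      push_cast
      nlinarith
    · intro h
      have hd : (0:ℝ) < (1-p)^k - p^k := by
        by_contra hc
        push_neg at hc
        have h2 := mul_le_mul_of_nonneg_left hc
          (by positivity : (0:ℝ) ≤ ((k:ℝ)+1)*(p*(1-p)))
        simp at h2
        nlinarith
      nlinarith
  | succ j =>
    have hpow : (0:ℝ) < (p * (1 - p)) ^ j := pow_pos hpq j
    have hE : ((j+1 : ℕ) * (p * (1 - p)) ^ ((j+1) - 1) * (1 - 2 * p)) * (p ^ (k+1) + (1 - p) ^ (k+1))
        + (p * (1 - p)) ^ (j+1) * ((k+1) * p ^ k - (k+1) * (1 - p) ^ k)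
        = (p * (1 - p)) ^ j *
          (((j:ℝ)+1) * (1 - 2*p) * (p^(k+1) + (1-p)^(k+1))
            - ((k:ℝ)+1) * (p*(1-p)) * ((1-p)^k - p^k)) := by
      push_cast
      ring
    rw [hE]
    push_cast
    constructor
    · intro h; nlinarith
    · intro h; nlinarith

/-- **Lemma 3(i).** Let `ℓ ≤ ℓ'` and `m ≤ m'` be non-negative integers and `0 < p < 1/2`,
with `q = 1 - p`.  If the derivative at `p` of `p ↦ (pq)^ℓ' (p^m + q^m)` is negative, then
the derivative at `p` of `p ↦ (pq)^ℓ (p^m' + q^m')` is negative. -/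
theorem deriv_neg_transfer (ℓ ℓ' m m' : ℕ) (hℓ : ℓ ≤ ℓ') (hm : m ≤ m')
    (p : ℝ) (hp0 : 0 < p) (hp : p < 1/2)
    (h : deriv (fun x : ℝ => (x * (1 - x)) ^ ℓ' * (x ^ m + (1 - x) ^ m)) p < 0) :
    deriv (fun x : ℝ => (x * (1 - x)) ^ ℓ * (x ^ m' + (1 - x) ^ m')) p < 0 := by
  rw [myDeriv] at h ⊢
  have hq0 : (0:ℝ) < 1 - p := by linarith
  cases m with
  | zero =>
    exfalso
    simp only [Nat.cast_zero, pow_zero, zero_mul, sub_zero, mul_zero, add_zero] at h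
    have h1 : (0:ℝ) ≤ (ℓ':ℝ) := Nat.cast_nonneg _
    have h2 : (0:ℝ) ≤ (p * (1 - p)) ^ (ℓ' - 1) := by positivity
    nlinarith [mul_nonneg (mul_nonneg h1 h2) (by linarith : (0:ℝ) ≤ 1 - 2*p)]
  | succ k =>
    obtain ⟨t, rfl⟩ := Nat.exists_eq_add_of_le hm
    have hk : k ≤ k + t := Nat.le_add_right _ _
    simp only [Nat.add_sub_cancel] at h
    have h' : (↑ℓ' * (p * (1 - p)) ^ (ℓ' - 1) * (1 - 2 * p)) * (p ^ (k+1) + (1 - p) ^ (k+1))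
        + (p * (1 - p)) ^ ℓ' * ((k+1) * p ^ k - (k+1) * (1 - p) ^ k) < 0 := by
      push_cast at h ⊢
      linarith
    have hcore := core ℓ ℓ' k (k + t) hℓ hk p hp0 hp ((sign_iff ℓ' k p hp0 hp).mp h')
    have hgoal := (sign_iff ℓ (k + t) p hp0 hp).mpr (by
      convert hcore using 2 <;> push_cast <;> ring)
    have e1 : k + 1 + t = (k + t) + 1 := by omega
    rw [e1]
    simp only [Nat.add_sub_cancel]
    push_cast at hgoal ⊢
    linarith
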